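/- arXiv:2504.01077 — 5 statements merged into one kernel-verified Lean document; each statement's English description precedes it below -/
import Mathlib

section
/- Effective idempotence: let H be an n×n Hermitian complex matrix, ψ ∈ ℂ^n a unit vector, Ψ = ψψ†, and V_Ψ = ⟨ψ, H²ψ⟩ − ⟨ψ, Hψ⟩². Then the third power of the commutator [Ψ, H] = ΨH − HΨ satisfies ([Ψ,H])³ = −V_Ψ · [Ψ,H]. -/
open scoped InnerProductSpace
open Matrix

noncomputable section

/-- The action of a matrix on a vector in `EuclideanSpace ℂ (Fin n)`. -/
def matApp {n : ℕ} (M : Matrix (Fin n) (Fin n) ℂ) (v : EuclideanSpace ℂ (Fin n)) :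
    EuclideanSpace ℂ (Fin n) :=
  Matrix.toEuclideanLin M v

/-- The rank-one outer product `ψψ†`. -/
def outerProd {n : ℕ} (v : EuclideanSpace ℂ (Fin n)) : Matrix (Fin n) (Fin n) ℂ :=
  Matrix.of fun a b => v a * (starRingEnd ℂ) (v b)

/-- Energy mean `E_Ψ = ⟨ψ, Hψ⟩`. -/
def energyMean {n : ℕ} (H : Matrix (Fin n) (Fin n) ℂ) (v : EuclideanSpace ℂ (Fin n)) : ℝ :=
  (⟪v, matApp H v⟫_ℂ).re

/-- Energy variance `V_Ψ = ⟨ψ, H²ψ⟩ − E_Ψ²`. -/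
def energyVar {n : ℕ} (H : Matrix (Fin n) (Fin n) ℂ) (v : EuclideanSpace ℂ (Fin n)) : ℝ :=
  (⟪v, matApp (H * H) v⟫_ℂ).re - (energyMean H v) ^ 2

lemma inner_matApp' {n : ℕ} (M : Matrix (Fin n) (Fin n) ℂ) (v : EuclideanSpace ℂ (Fin n)) :
    ⟪v, matApp M v⟫_ℂ = ∑ c, ∑ d, (starRingEnd ℂ) (v c) * (M c d * v d) := by
  simp [matApp, PiLp.inner_apply, Matrix.toEuclideanLin_apply, Matrix.mulVec, dotProduct,
    Finset.mul_sum, Finset.sum_mul, mul_comm]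

lemma sandwich' {n : ℕ} (ψ : EuclideanSpace ℂ (Fin n)) (M : Matrix (Fin n) (Fin n) ℂ) :
    outerProd ψ * M * outerProd ψ = (⟪ψ, matApp M ψ⟫_ℂ) • outerProd ψ := by
  ext a b
  rw [inner_matApp']
  simp only [Matrix.mul_apply, outerProd, Matrix.of_apply, Matrix.smul_apply, smul_eq_mul,
    Finset.sum_mul, Finset.mul_sum]
  rw [Finset.sum_comm]
  refine Finset.sum_congr rfl fun d _ => Finset.sum_congr rfl fun c _ => by ring

lemma outer_idem' {n : ℕ} (ψ : EuclideanSpace ℂ (Fin n)) (hψ : ‖ψ‖ = 1) :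
    outerProd ψ * outerProd ψ = outerProd ψ := by
  ext a b
  have h : ∑ c, (starRingEnd ℂ) (ψ c) * ψ c = 1 := by
    have := @inner_self_eq_norm_sq_to_K ℂ _ _ _ _ ψ
    rw [hψ] at this
    simp only [PiLp.inner_apply, RCLike.inner_apply] at this
    simpa [mul_comm] using this
  simp only [Matrix.mul_apply, outerProd, Matrix.of_apply]
  calc ∑ c, (ψ a * (starRingEnd ℂ) (ψ c)) * (ψ c * (starRingEnd ℂ) (ψ b))
      = (ψ a * (starRingEnd ℂ) (ψ b)) * ∑ c, (starRingEnd ℂ) (ψ c) * ψ c := by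
        rw [Finset.mul_sum]; exact Finset.sum_congr rfl fun c _ => by ring
    _ = ψ a * (starRingEnd ℂ) (ψ b) := by rw [h, mul_one]

lemma cube_comm' {R : Type*} [Ring R] [Algebra ℂ R] (P h : R) (e s : ℂ)
    (hPP : P * P = P) (hE : P * h * P = e • P) (hS : P * (h * h) * P = s • P) :
    (P * h - h * P) ^ 3 = (e ^ 2 - s) • (P * h - h * P) := by
  set x := P * h with hx
  set y := h * P with hy
  have hxx : x * x = e • x := by
    calc x * x = (P * h * P) * h := by rw [hx]; noncomm_ring
    _ = e • x := by rw [hE, smul_mul_assoc, hx]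
  have hxy : x * y = s • P := by
    calc x * y = P * (h * h) * P := by rw [hx, hy]; noncomm_ring
    _ = s • P := hS
  have hyx : y * x = h * P * h := by
    calc y * x = h * (P * P) * h := by rw [hx, hy]; noncomm_ring
    _ = h * P * h := by rw [hPP]
  have hyy : y * y = e • y := by
    calc y * y = h * (P * h * P) := by rw [hy]; noncomm_ring
    _ = e • y := by rw [hE, hy, mul_smul_comm]
  have hPy : P * y = e • P := by rw [hy, ← mul_assoc, hE]
  have hPx : P * x = x := by rw [hx, ← mul_assoc, hPP]
  have m1 : x*x*x = (e*e) • x := by rw [hxx, smul_mul_assoc, hxx, smul_smul]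
  have m2 : x*x*y = (e*s) • P := by rw [hxx, smul_mul_assoc, hxy, smul_smul]
  have m3 : x*y*x = s • x := by rw [hxy, smul_mul_assoc, hPx]
  have m4 : x*y*y = (s*e) • P := by rw [hxy, smul_mul_assoc, hPy, smul_smul]
  have m5 : y*x*x = e • (h*P*h) := by
    rw [hyx]
    calc h*P*h*x = h * (P*h*P) * h := by rw [hx]; noncomm_ring
    _ = e • (h*P*h) := by rw [hE, mul_smul_comm, smul_mul_assoc]
  have m6 : y*x*y = s • y := by
    rw [hyx]
    calc h*P*h*y = h * (P*(h*h)*P) := by rw [hy]; noncomm_ring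
    _ = s • y := by rw [hS, mul_smul_comm, hy]
  have m7 : y*y*x = e • (h*P*h) := by rw [hyy, smul_mul_assoc, hyx]
  have m8 : y*y*y = (e*e) • y := by rw [hyy, smul_mul_assoc, hyy, smul_smul]
  have expand : (x - y) ^ 3 =
      x*x*x - x*x*y - x*y*x + x*y*y - y*x*x + y*x*y + y*y*x - y*y*y := by
    noncomm_ring
  rw [expand, m1, m2, m3, m4, m5, m6, m7, m8]
  rw [sub_smul, sq]
  module

lemma inner_real_of_hermitian {n : ℕ} {M : Matrix (Fin n) (Fin n) ℂ} (hM : M.IsHermitian)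
    (ψ : EuclideanSpace ℂ (Fin n)) :
    (((⟪ψ, matApp M ψ⟫_ℂ).re : ℂ)) = ⟪ψ, matApp M ψ⟫_ℂ := by
  rw [← Complex.conj_eq_iff_re]
  have hsym := (Matrix.isHermitian_iff_isSymmetric.mp hM)
  calc (starRingEnd ℂ) ⟪ψ, matApp M ψ⟫_ℂ = ⟪matApp M ψ, ψ⟫_ℂ := by
        rw [inner_conj_symm]
    _ = ⟪ψ, matApp M ψ⟫_ℂ := hsym ψ ψ

/-- Effective idempotence: for Hermitian `H` and unit `ψ`, with
`W = [ψψ†, H]`, one has `W³ = −V_Ψ · W`. -/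
theorem effective_idempotence {n : ℕ} (hn : 1 ≤ n)
    (H : Matrix (Fin n) (Fin n) ℂ) (hH : H.IsHermitian)
    (ψ : EuclideanSpace ℂ (Fin n)) (hψ : ‖ψ‖ = 1) :
    (outerProd ψ * H - H * outerProd ψ) ^ 3
      = (-(energyVar H ψ) : ℂ) • (outerProd ψ * H - H * outerProd ψ) := by
  set e : ℂ := ⟪ψ, matApp H ψ⟫_ℂ with he
  set s : ℂ := ⟪ψ, matApp (H * H) ψ⟫_ℂ with hs
  have key := cube_comm' (outerProd ψ) H e s (outer_idem' ψ hψ) (sandwich' ψ H)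
    (sandwich' ψ (H * H))
  rw [key]
  congr 1
  have hH2 : (H * H).IsHermitian := by
    unfold Matrix.IsHermitian
    rw [Matrix.conjTranspose_mul, hH.eq]
  have hre : ((e.re : ℂ)) = e := inner_real_of_hermitian hH ψ
  have hse : ((s.re : ℂ)) = s := inner_real_of_hermitian hH2 ψ
  rw [energyVar, energyMean, ← he, ← hs]
  push_cast
  rw [hre, hse]
  ring
end
end

section
/- Let H be an n×n Hermitian complex matrix, ψ ∈ ℂ^n a unit vector, Ψ = ψψ†, E_Ψ = ⟨ψ, Hψ⟩, and assume V_Ψ = ⟨ψ, H²ψ⟩ − E_Ψ² > 0. Then for every real s, exp(s[Ψ,H]) ψ = (a(s)·I + b(s)·H) ψ, where a(s) = (E_Ψ/√V_Ψ)·sin(s√V_Ψ) + cos(s√V_Ψ) and b(s) = −(1/√V_Ψ)·sin(s√V_Ψ). -/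
open scoped InnerProductSpace
open Matrix

noncomputable section

namespace ExpCommAux

variable {n : ℕ}

lemma matApp_apply (M : Matrix (Fin n) (Fin n) ℂ) (v : EuclideanSpace ℂ (Fin n)) (a : Fin n) :
    matApp M v a = ∑ b, M a b * v b := by
  simp [matApp, Matrix.toEuclideanLin_apply, Matrix.mulVec, dotProduct]

lemma matApp_add (M N : Matrix (Fin n) (Fin n) ℂ) (v : EuclideanSpace ℂ (Fin n)) :
    matApp (M + N) v = matApp M v + matApp N v := by
  simp [matApp, map_add, LinearMap.add_apply]

lemma matApp_sub (M N : Matrix (Fin n) (Fin n) ℂ) (v : EuclideanSpace ℂ (Fin n)) :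
    matApp (M - N) v = matApp M v - matApp N v := by
  simp [matApp, map_sub, LinearMap.sub_apply]

lemma matApp_smul (c : ℂ) (M : Matrix (Fin n) (Fin n) ℂ) (v : EuclideanSpace ℂ (Fin n)) :
    matApp (c • M) v = c • matApp M v := by
  simp [matApp, _root_.map_smul, LinearMap.smul_apply]

lemma matApp_one (v : EuclideanSpace ℂ (Fin n)) : matApp 1 v = v := by
  ext a
  simp [matApp_apply, Matrix.one_apply]

lemma matApp_mul (M N : Matrix (Fin n) (Fin n) ℂ) (v : EuclideanSpace ℂ (Fin n)) :
    matApp (M * N) v = matApp M (matApp N v) := by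
  simp [matApp, Matrix.toEuclideanLin_apply, ← Matrix.mulVec_mulVec]

lemma matApp_smulvec (M : Matrix (Fin n) (Fin n) ℂ) (c : ℂ) (v : EuclideanSpace ℂ (Fin n)) :
    matApp M (c • v) = c • matApp M v := by
  simp [matApp, _root_.map_smul]

lemma matApp_subvec (M : Matrix (Fin n) (Fin n) ℂ) (u v : EuclideanSpace ℂ (Fin n)) :
    matApp M (u - v) = matApp M u - matApp M v := by
  simp [matApp, map_sub]

lemma outer_apply (ψ v : EuclideanSpace ℂ (Fin n)) :
    matApp (outerProd ψ) v = ⟪ψ, v⟫_ℂ • ψ := by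
  ext a
  simp only [matApp_apply, outerProd, Matrix.of_apply, PiLp.smul_apply, smul_eq_mul,
    PiLp.inner_apply, RCLike.inner_apply]
  rw [Finset.sum_mul]
  exact Finset.sum_congr rfl fun b _ => by ring

lemma symm_fact (H : Matrix (Fin n) (Fin n) ℂ) (hH : H.IsHermitian)
    (x y : EuclideanSpace ℂ (Fin n)) :
    ⟪matApp H x, y⟫_ℂ = ⟪x, matApp H y⟫_ℂ :=
  (Matrix.isHermitian_iff_isSymmetric.mp hH) x y

lemma inner_real (H : Matrix (Fin n) (Fin n) ℂ) (hH : H.IsHermitian)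
    (ψ : EuclideanSpace ℂ (Fin n)) :
    ⟪ψ, matApp H ψ⟫_ℂ = ((⟪ψ, matApp H ψ⟫_ℂ).re : ℂ) := by
  have h : (starRingEnd ℂ) ⟪ψ, matApp H ψ⟫_ℂ = ⟪ψ, matApp H ψ⟫_ℂ := by
    rw [inner_conj_symm, symm_fact H hH]
  exact (Complex.conj_eq_iff_re.mp h).symm

lemma inner_psi_self (ψ : EuclideanSpace ℂ (Fin n)) (hψ : ‖ψ‖ = 1) :
    ⟪ψ, ψ⟫_ℂ = 1 := by
  rw [inner_self_eq_norm_sq_to_K, hψ]; norm_num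

lemma matrix_exp_hasSum (A : Matrix (Fin n) (Fin n) ℂ) :
    HasSum (fun k : ℕ => ((Nat.factorial k : ℂ))⁻¹ • A ^ k) (NormedSpace.exp A) := by
  letI : SeminormedRing (Matrix (Fin n) (Fin n) ℂ) := Matrix.linftyOpSemiNormedRing
  letI : NormedRing (Matrix (Fin n) (Fin n) ℂ) := Matrix.linftyOpNormedRing
  letI : NormedAlgebra ℂ (Matrix (Fin n) (Fin n) ℂ) := Matrix.linftyOpNormedAlgebra
  exact NormedSpace.exp_series_hasSum_exp' (𝕂 := ℂ) A

/-- `M ↦ matApp M ψ` as a continuous linear map. -/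
def appT (ψ : EuclideanSpace ℂ (Fin n)) :
    Matrix (Fin n) (Fin n) ℂ →L[ℂ] EuclideanSpace ℂ (Fin n) :=
  LinearMap.toContinuousLinearMap
    { toFun := fun M => matApp M ψ
      map_add' := fun M N => matApp_add M N ψ
      map_smul' := fun c M => matApp_smul c M ψ }

lemma matApp_exp_hasSum (ψ : EuclideanSpace ℂ (Fin n)) (A : Matrix (Fin n) (Fin n) ℂ) :
    HasSum (fun k : ℕ => ((Nat.factorial k : ℂ))⁻¹ • matApp (A ^ k) ψ)
      (matApp (NormedSpace.exp A) ψ) := by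
  have h := (matrix_exp_hasSum A).mapL (appT ψ)
  simpa [appT, matApp_smul] using h

end ExpCommAux

open ExpCommAux

set_option maxHeartbeats 1000000 in
/-- for Hermitian `H`, unit `ψ`, `V_Ψ > 0` and any real `s`,
`exp(s[Ψ,H]) ψ = (a(s)·I + b(s)·H) ψ`, where
`a(s) = (E/√V)·sin(s√V) + cos(s√V)` and `b(s) = −(1/√V)·sin(s√V)`. -/
theorem exp_commutator_apply_state {n : ℕ} (hn : 1 ≤ n)
    (H : Matrix (Fin n) (Fin n) ℂ) (hH : H.IsHermitian)
    (ψ : EuclideanSpace ℂ (Fin n)) (hψ : ‖ψ‖ = 1)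
    (hV : 0 < energyVar H ψ) (s : ℝ) :
    matApp (NormedSpace.exp ((s : ℂ) • (outerProd ψ * H - H * outerProd ψ))) ψ
      = matApp
          ((((energyMean H ψ / Real.sqrt (energyVar H ψ))
                * Real.sin (s * Real.sqrt (energyVar H ψ))
              + Real.cos (s * Real.sqrt (energyVar H ψ)) : ℝ) : ℂ) • 1
            + ((-(1 / Real.sqrt (energyVar H ψ))
                * Real.sin (s * Real.sqrt (energyVar H ψ)) : ℝ) : ℂ) • H) ψ := by
  set E : ℝ := energyMean H ψ with hEdef
  set V : ℝ := energyVar H ψ with hVdef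
  set r : ℝ := Real.sqrt V with hrdef
  set A : Matrix (Fin n) (Fin n) ℂ := outerProd ψ * H - H * outerProd ψ with hAdef
  have hVr : V = r ^ 2 := (Real.sq_sqrt hV.le).symm
  have hrpos : 0 < r := Real.sqrt_pos.mpr hV
  have hrne : r ≠ 0 := hrpos.ne'
  have houter : matApp (outerProd ψ) ψ = ψ := by
    rw [outer_apply, inner_psi_self ψ hψ, one_smul]
  have hE : ⟪ψ, matApp H ψ⟫_ℂ = (E : ℂ) := inner_real H hH ψ
  have hermHH : (H * H).IsHermitian := by
    rw [Matrix.IsHermitian, Matrix.conjTranspose_mul, hH]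
  have hH2 : ⟪ψ, matApp (H * H) ψ⟫_ℂ = ((V + E ^ 2 : ℝ) : ℂ) := by
    rw [inner_real (H * H) hermHH ψ]
    norm_cast
    rw [hVdef, hEdef]
    simp [energyVar]
  have hApsi : matApp A ψ = (E : ℂ) • ψ - matApp H ψ := by
    rw [hAdef, matApp_sub, matApp_mul, matApp_mul, houter, outer_apply, hE]
  have hAH : matApp A (matApp H ψ) = ((V + E ^ 2 : ℝ) : ℂ) • ψ - (E : ℂ) • matApp H ψ := by
    rw [hAdef, matApp_sub, matApp_mul, matApp_mul, outer_apply, ← matApp_mul H H ψ, hH2,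
      outer_apply, hE, matApp_smulvec]
  have hA2 : matApp A (matApp A ψ) = ((-V : ℝ) : ℂ) • ψ := by
    rw [hApsi, matApp_subvec, matApp_smulvec, hApsi, hAH]
    have hc : ((-V : ℝ) : ℂ) = (E : ℂ) * (E : ℂ) - ((V + E ^ 2 : ℝ) : ℂ) := by
      push_cast; ring
    rw [hc]
    module
  -- powers
  have hpow : ∀ m : ℕ,
      matApp (A ^ (2 * m)) ψ = (((-V) ^ m : ℝ) : ℂ) • ψ ∧
      matApp (A ^ (2 * m + 1)) ψ = (((-V) ^ m : ℝ) : ℂ) • matApp A ψ := by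
    intro m
    induction m with
    | zero => simp [matApp_one]
    | succ m ih =>
      have e1 : 2 * (m + 1) = (2 * m + 1) + 1 := by ring
      have h1 : matApp (A ^ (2 * (m + 1))) ψ = (((-V) ^ (m + 1) : ℝ) : ℂ) • ψ := by
        rw [e1, pow_succ', matApp_mul, ih.2, matApp_smulvec, hA2, smul_smul]
        congr 1
        push_cast
        ring
      refine ⟨h1, ?_⟩
      rw [pow_succ', matApp_mul, h1, matApp_smulvec]
  -- the series
  have hsumExp := matApp_exp_hasSum ψ ((s : ℂ) • A)
  have hf : (fun k : ℕ => ((Nat.factorial k : ℂ))⁻¹ • matApp (((s : ℂ) • A) ^ k) ψ)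
      = fun k : ℕ => ((s : ℂ) ^ k * ((Nat.factorial k : ℂ))⁻¹) • matApp (A ^ k) ψ := by
    funext k
    rw [smul_pow, matApp_smul, smul_smul, mul_comm]
  rw [hf] at hsumExp
  -- even part
  have hscE : ∀ m : ℕ, (-1 : ℝ) ^ m * (s * r) ^ (2 * m) / (Nat.factorial (2 * m))
      = s ^ (2 * m) * ((Nat.factorial (2 * m) : ℝ))⁻¹ * (-V) ^ m := by
    intro m
    rw [hVr, mul_pow, pow_mul s, pow_mul r, neg_pow]
    field_simp
    ring
  have heven : HasSum
      (fun m : ℕ => ((s : ℂ) ^ (2 * m) * ((Nat.factorial (2 * m) : ℂ))⁻¹) • matApp (A ^ (2 * m)) ψ)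
      (((Real.cos (s * r) : ℝ) : ℂ) • ψ) := by
    have h0 := ((Real.hasSum_cos (s * r)).mapL Complex.ofRealCLM).smul_const ψ
    simp only [Complex.ofRealCLM_apply] at h0
    have hfun : (fun m : ℕ =>
        ((s : ℂ) ^ (2 * m) * ((Nat.factorial (2 * m) : ℂ))⁻¹) • matApp (A ^ (2 * m)) ψ)
        = fun m : ℕ =>
          (((-1 : ℝ) ^ m * (s * r) ^ (2 * m) / (Nat.factorial (2 * m)) : ℝ) : ℂ) • ψ := by
      funext m
      rw [(hpow m).1, smul_smul]
      congr 1
      rw [hscE m]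
      push_cast
      ring
    rw [hfun]
    exact h0
  -- odd part
  have hscO : ∀ m : ℕ, r⁻¹ * ((-1 : ℝ) ^ m * (s * r) ^ (2 * m + 1) / (Nat.factorial (2 * m + 1)))
      = s ^ (2 * m + 1) * ((Nat.factorial (2 * m + 1) : ℝ))⁻¹ * (-V) ^ m := by
    intro m
    rw [hVr, pow_succ (s * r), pow_succ s, mul_pow, pow_mul s, pow_mul r, neg_pow]
    field_simp
    ring
  have hodd : HasSum
      (fun m : ℕ => ((s : ℂ) ^ (2 * m + 1) * ((Nat.factorial (2 * m + 1) : ℂ))⁻¹) •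
        matApp (A ^ (2 * m + 1)) ψ)
      (((r⁻¹ * Real.sin (s * r) : ℝ) : ℂ) • matApp A ψ) := by
    have h0 := (((Real.hasSum_sin (s * r)).mul_left r⁻¹).mapL Complex.ofRealCLM).smul_const
      (matApp A ψ)
    simp only [Complex.ofRealCLM_apply] at h0
    have hfun : (fun m : ℕ =>
        ((s : ℂ) ^ (2 * m + 1) * ((Nat.factorial (2 * m + 1) : ℂ))⁻¹) • matApp (A ^ (2 * m + 1)) ψ)
        = fun m : ℕ =>
          ((r⁻¹ * ((-1 : ℝ) ^ m * (s * r) ^ (2 * m + 1) / (Nat.factorial (2 * m + 1))) : ℝ) : ℂ) •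
            matApp A ψ := by
      funext m
      rw [(hpow m).2, smul_smul]
      congr 1
      rw [hscO m]
      push_cast
      ring
    rw [hfun]
    exact h0
  have htotal : HasSum
      (fun k : ℕ => ((s : ℂ) ^ k * ((Nat.factorial k : ℂ))⁻¹) • matApp (A ^ k) ψ)
      (((Real.cos (s * r) : ℝ) : ℂ) • ψ
        + ((r⁻¹ * Real.sin (s * r) : ℝ) : ℂ) • matApp A ψ) :=
    HasSum.even_add_odd heven hodd
  have hval : matApp (NormedSpace.exp ((s : ℂ) • A)) ψ
      = ((Real.cos (s * r) : ℝ) : ℂ) • ψ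
        + ((r⁻¹ * Real.sin (s * r) : ℝ) : ℂ) • matApp A ψ :=
    hsumExp.unique htotal
  rw [hval, hApsi, matApp_add, matApp_smul, matApp_smul, matApp_one]
  rw [smul_sub, smul_smul]
  push_cast
  module
end
end

section
/- Unitary synthesis for linear polynomials with a real root: let H be an n×n Hermitian complex matrix, ψ ∈ ℂ^n a unit vector, Ψ = ψψ†, E_Ψ = ⟨ψ, Hψ⟩, and assume V_Ψ = ⟨ψ, H²ψ⟩ − E_Ψ² > 0. For any real α, set s_Ψ = −(1/√V_Ψ)·arccos( (E_Ψ − α) / √(V_Ψ + (E_Ψ − α)²) ). Then exp(s_Ψ·[Ψ,H]) ψ = (H − αI)ψ / ‖(H − αI)ψ‖; in particular (H − αI)ψ ≠ 0. -/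
open scoped InnerProductSpace
open Matrix

noncomputable section

section AuxLemmas
variable {n : ℕ}

lemma matApp_apply (M : Matrix (Fin n) (Fin n) ℂ) (v : EuclideanSpace ℂ (Fin n)) (a : Fin n) :
    matApp M v a = ∑ b, M a b * v b := by
  simp [matApp, Matrix.toEuclideanLin_apply, Matrix.mulVec, dotProduct]

lemma matApp_mul (M N : Matrix (Fin n) (Fin n) ℂ) (v : EuclideanSpace ℂ (Fin n)) :
    matApp (M * N) v = matApp M (matApp N v) := by
  ext a
  simp only [matApp_apply, Matrix.mul_apply, Finset.sum_mul, Finset.mul_sum, mul_assoc]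
  exact Finset.sum_comm

lemma matApp_add (M N : Matrix (Fin n) (Fin n) ℂ) (v : EuclideanSpace ℂ (Fin n)) :
    matApp (M + N) v = matApp M v + matApp N v := by
  ext a
  simp [matApp_apply, Matrix.add_apply, add_mul, Finset.sum_add_distrib]

lemma matApp_sub (M N : Matrix (Fin n) (Fin n) ℂ) (v : EuclideanSpace ℂ (Fin n)) :
    matApp (M - N) v = matApp M v - matApp N v := by
  ext a
  simp [matApp_apply, Matrix.sub_apply, sub_mul, Finset.sum_sub_distrib]

lemma matApp_smulM (c : ℂ) (M : Matrix (Fin n) (Fin n) ℂ) (v : EuclideanSpace ℂ (Fin n)) :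
    matApp (c • M) v = c • matApp M v := by
  ext a
  simp [matApp_apply, Matrix.smul_apply, Finset.mul_sum, mul_assoc]

lemma matApp_one (v : EuclideanSpace ℂ (Fin n)) : matApp (1 : Matrix (Fin n) (Fin n) ℂ) v = v := by
  ext a
  simp [matApp_apply, Matrix.one_apply]

lemma matApp_smulv (M : Matrix (Fin n) (Fin n) ℂ) (c : ℂ) (v : EuclideanSpace ℂ (Fin n)) :
    matApp M (c • v) = c • matApp M v := by
  ext a
  simp only [matApp_apply, PiLp.smul_apply, smul_eq_mul, Finset.mul_sum]
  exact Finset.sum_congr rfl fun b _ => by ring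

lemma matApp_subv (M : Matrix (Fin n) (Fin n) ℂ) (v w : EuclideanSpace ℂ (Fin n)) :
    matApp M (v - w) = matApp M v - matApp M w := by
  ext a
  simp [matApp_apply, mul_sub, Finset.sum_sub_distrib]

lemma matApp_outer (ψ v : EuclideanSpace ℂ (Fin n)) :
    matApp (outerProd ψ) v = (⟪ψ, v⟫_ℂ) • ψ := by
  ext a
  simp only [matApp_apply, outerProd, Matrix.of_apply, PiLp.smul_apply, smul_eq_mul,
    PiLp.inner_apply, RCLike.inner_apply]
  rw [Finset.sum_mul]
  exact Finset.sum_congr rfl fun b _ => by ring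

lemma matApp_inner_left {H : Matrix (Fin n) (Fin n) ℂ} (hH : H.IsHermitian)
    (x y : EuclideanSpace ℂ (Fin n)) :
    ⟪matApp H x, y⟫_ℂ = ⟪x, matApp H y⟫_ℂ := by
  have h : Matrix.toEuclideanLin H = LinearMap.adjoint (Matrix.toEuclideanLin H) := by
    conv_lhs => rw [← hH.eq]
    exact Matrix.toEuclideanLin_conjTranspose_eq_adjoint H
  show ⟪Matrix.toEuclideanLin H x, y⟫_ℂ = ⟪x, Matrix.toEuclideanLin H y⟫_ℂ
  conv_lhs => rw [h]
  exact LinearMap.adjoint_inner_left _ y x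

end AuxLemmas

set_option maxHeartbeats 1000000 in
/-- Unitary synthesis for linear polynomials with a real root:
for Hermitian `H`, unit `ψ` with `V_Ψ > 0`, and any real `α`, setting
`s_Ψ = −(1/√V_Ψ)·arccos((E_Ψ − α)/√(V_Ψ + (E_Ψ − α)²))`,
one has `(H − αI)ψ ≠ 0` and `exp(s_Ψ·[Ψ,H]) ψ = (H − αI)ψ / ‖(H − αI)ψ‖`. -/
theorem unitary_synthesis_linear_real_root {n : ℕ} (hn : 1 ≤ n)
    (H : Matrix (Fin n) (Fin n) ℂ) (hH : H.IsHermitian)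
    (ψ : EuclideanSpace ℂ (Fin n)) (hψ : ‖ψ‖ = 1)
    (hV : 0 < energyVar H ψ) (α : ℝ) :
    matApp (H - (α : ℂ) • 1) ψ ≠ 0 ∧
    matApp
        (NormedSpace.exp
          (((-(1 / Real.sqrt (energyVar H ψ))
              * Real.arccos ((energyMean H ψ - α)
                  / Real.sqrt (energyVar H ψ + (energyMean H ψ - α) ^ 2)) : ℝ) : ℂ)
            • (outerProd ψ * H - H * outerProd ψ))) ψ
      = (‖matApp (H - (α : ℂ) • 1) ψ‖ : ℂ)⁻¹ • matApp (H - (α : ℂ) • 1) ψ := by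
  set E : ℝ := energyMean H ψ with hEdef
  set V : ℝ := energyVar H ψ with hVdef
  set N : ℝ := Real.sqrt (V + (E - α) ^ 2) with hNdef
  set s : ℝ := -(1 / Real.sqrt V) * Real.arccos ((E - α) / N) with hsdef
  set A : Matrix (Fin n) (Fin n) ℂ := outerProd ψ * H - H * outerProd ψ with hAdef
  set w : EuclideanSpace ℂ (Fin n) := matApp H ψ with hwdef
  have hsqV : Real.sqrt V ^ 2 = V := Real.sq_sqrt hV.le
  have hsqVpos : 0 < Real.sqrt V := Real.sqrt_pos.2 hV
  have hNsq : N ^ 2 = V + (E - α) ^ 2 := Real.sq_sqrt (by positivity)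
  have hNpos : 0 < N := Real.sqrt_pos.2 (by positivity)
  -- basic inner product facts
  have hψ1 : ⟪ψ, ψ⟫_ℂ = 1 := by
    rw [inner_self_eq_norm_sq_to_K, hψ]; norm_num
  have hEc : ⟪ψ, w⟫_ℂ = (E : ℂ) := by
    have hc : (starRingEnd ℂ) ⟪ψ, w⟫_ℂ = ⟪ψ, w⟫_ℂ := by
      rw [inner_conj_symm]
      exact matApp_inner_left hH ψ ψ
    have := Complex.conj_eq_iff_re.mp hc
    rw [← this, hEdef]; rfl
  have hwψ : ⟪w, ψ⟫_ℂ = (E : ℂ) := by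
    rw [← inner_conj_symm, hEc]; simp
  have hww : ⟪w, w⟫_ℂ = ((V + E ^ 2 : ℝ) : ℂ) := by
    have h1 : ⟪ψ, matApp (H * H) ψ⟫_ℂ = ⟪w, w⟫_ℂ := by
      rw [matApp_mul]
      exact (matApp_inner_left hH ψ w).symm
    have h2 : ⟪w, w⟫_ℂ = ((‖w‖ ^ 2 : ℝ) : ℂ) := by
      rw [inner_self_eq_norm_sq_to_K]; norm_cast
    have h3 : V = ‖w‖ ^ 2 - E ^ 2 := by
      rw [hVdef]
      simp only [energyVar, ← hEdef, h1, h2, Complex.ofReal_re, ← hwdef]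
    rw [h2, h3]; push_cast; ring
  -- action of A
  have hAv : ∀ v : EuclideanSpace ℂ (Fin n),
      matApp A v = ⟪w, v⟫_ℂ • ψ - ⟪ψ, v⟫_ℂ • w := by
    intro v
    rw [hAdef, matApp_sub, matApp_mul, matApp_mul, matApp_outer, matApp_outer, matApp_smulv]
    congr 1
    rw [hwdef, ← matApp_inner_left hH]
  have hAψ : matApp A ψ = (E : ℂ) • ψ - w := by
    rw [hAv, hwψ, hψ1, one_smul]
  have hAw : matApp A w = ((V + E ^ 2 : ℝ) : ℂ) • ψ - (E : ℂ) • w := by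
    rw [hAv, hww, hEc]
  have hAAψ : matApp A (matApp A ψ) = ((-V : ℝ) : ℂ) • ψ := by
    rw [hAψ, matApp_subv, matApp_smulv, hAψ, hAw]
    have hc : (E : ℂ) * E - ((V + E ^ 2 : ℝ) : ℂ) = ((-V : ℝ) : ℂ) := by
      push_cast; ring
    rw [smul_sub, smul_smul, sub_sub_sub_cancel_right, ← sub_smul, hc]
  -- powers
  have hEven : ∀ k : ℕ, matApp (A ^ (2 * k)) ψ = (((-V) ^ k : ℝ) : ℂ) • ψ := by
    intro k
    induction k with
    | zero => simp [matApp_one]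
    | succ k ih =>
      have h2 : 2 * (k + 1) = (2 * k + 1) + 1 := by ring
      rw [h2, pow_succ', pow_succ', matApp_mul, matApp_mul, ih, matApp_smulv, matApp_smulv, hAAψ,
        smul_smul]
      congr 1
      push_cast; ring
  have hOdd : ∀ k : ℕ, matApp (A ^ (2 * k + 1)) ψ = (((-V) ^ k : ℝ) : ℂ) • matApp A ψ := by
    intro k
    rw [pow_succ', matApp_mul, hEven, matApp_smulv]
  -- the exponential series
  set θ : ℝ := s * Real.sqrt V with hθdef
  have hVC : ((Real.sqrt V : ℝ) : ℂ) ^ 2 = (V : ℂ) := by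
    rw [← Complex.ofReal_pow, hsqV]
  have hsV0 : ((Real.sqrt V : ℝ) : ℂ) ≠ 0 := by exact_mod_cast hsqVpos.ne'
  have hθC : ((θ : ℝ) : ℂ) = (s : ℂ) * ((Real.sqrt V : ℝ) : ℂ) := by
    rw [hθdef]; push_cast; ring
  letI : SeminormedRing (Matrix (Fin n) (Fin n) ℂ) := Matrix.linftyOpSemiNormedRing
  letI : NormedRing (Matrix (Fin n) (Fin n) ℂ) := Matrix.linftyOpNormedRing
  letI : NormedAlgebra ℂ (Matrix (Fin n) (Fin n) ℂ) := Matrix.linftyOpNormedAlgebra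
  have hexp : HasSum (fun k : ℕ => ((Nat.factorial k : ℕ) : ℂ)⁻¹ • ((s : ℂ) • A) ^ k)
      (NormedSpace.exp ((s : ℂ) • A)) := NormedSpace.exp_series_hasSum_exp' _
  let L : Matrix (Fin n) (Fin n) ℂ →ₗ[ℂ] EuclideanSpace ℂ (Fin n) :=
    { toFun := fun M => matApp M ψ
      map_add' := fun M N => matApp_add M N ψ
      map_smul' := fun c M => matApp_smulM c M ψ }
  have hLcont : Continuous L := LinearMap.continuous_of_finiteDimensional L
  have happ : HasSum (fun k : ℕ => L (((Nat.factorial k : ℕ) : ℂ)⁻¹ • ((s : ℂ) • A) ^ k))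
      (L (NormedSpace.exp ((s : ℂ) • A))) := hexp.map L.toAddMonoidHom hLcont
  have hfk : ∀ k : ℕ, L (((Nat.factorial k : ℕ) : ℂ)⁻¹ • ((s : ℂ) • A) ^ k)
      = (((Nat.factorial k : ℕ) : ℂ))⁻¹ • ((s : ℂ) ^ k • matApp (A ^ k) ψ) := by
    intro k
    show matApp (((Nat.factorial k : ℕ) : ℂ)⁻¹ • ((s : ℂ) • A) ^ k) ψ = _
    rw [smul_pow, matApp_smulM, matApp_smulM]
  have hfact : ∀ k : ℕ, (((Nat.factorial k : ℕ) : ℂ)) ≠ 0 :=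
    fun k => Nat.cast_ne_zero.2 (Nat.factorial_ne_zero _)
  have heven : HasSum (fun k : ℕ => L (((Nat.factorial (2 * k) : ℕ) : ℂ)⁻¹ • ((s : ℂ) • A) ^ (2 * k)))
      ((Complex.cos ((θ : ℝ) : ℂ)) • ψ) := by
    have h := (Complex.hasSum_cos ((θ : ℝ) : ℂ)).smul_const ψ
    convert h using 1
    funext k
    rw [hfk, hEven, smul_smul, smul_smul]
    congr 1
    have hθp : ((θ : ℝ) : ℂ) ^ (2 * k) = (s : ℂ) ^ (2 * k) * (V : ℂ) ^ k := by
      rw [hθC, mul_pow, pow_mul ((Real.sqrt V : ℝ) : ℂ), hVC]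
    rw [hθp]
    push_cast
    rw [neg_pow]
    field_simp [hfact (2 * k)]
  have hodd : HasSum (fun k : ℕ => L (((Nat.factorial (2 * k + 1) : ℕ) : ℂ)⁻¹ • ((s : ℂ) • A) ^ (2 * k + 1)))
      (((Complex.sin ((θ : ℝ) : ℂ)) / ((Real.sqrt V : ℝ) : ℂ)) • matApp A ψ) := by
    have h := ((Complex.hasSum_sin ((θ : ℝ) : ℂ)).div_const ((Real.sqrt V : ℝ) : ℂ)).smul_const
      (matApp A ψ)
    convert h using 1
    funext k
    rw [hfk, hOdd, smul_smul, smul_smul]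
    congr 1
    have hθp : ((θ : ℝ) : ℂ) ^ (2 * k + 1)
        = (s : ℂ) ^ (2 * k + 1) * ((V : ℂ) ^ k * ((Real.sqrt V : ℝ) : ℂ)) := by
      rw [hθC, mul_pow, pow_succ ((Real.sqrt V : ℝ) : ℂ), pow_mul ((Real.sqrt V : ℝ) : ℂ), hVC]
    rw [hθp]
    push_cast
    rw [neg_pow]
    field_simp [hfact (2 * k + 1)]
  have htotal : HasSum (fun k : ℕ => L (((Nat.factorial k : ℕ) : ℂ)⁻¹ • ((s : ℂ) • A) ^ k))
      ((Complex.cos ((θ : ℝ) : ℂ)) • ψ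
        + ((Complex.sin ((θ : ℝ) : ℂ)) / ((Real.sqrt V : ℝ) : ℂ)) • matApp A ψ) :=
    HasSum.even_add_odd heven hodd
  have hval : matApp (NormedSpace.exp ((s : ℂ) • A)) ψ
      = (Complex.cos ((θ : ℝ) : ℂ)) • ψ
        + ((Complex.sin ((θ : ℝ) : ℂ)) / ((Real.sqrt V : ℝ) : ℂ)) • matApp A ψ :=
    happ.unique htotal
  -- norm of (H - α) ψ
  have hu : matApp (H - (α : ℂ) • 1) ψ = w - (α : ℂ) • ψ := by
    rw [matApp_sub, matApp_smulM, matApp_one]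
  have huu : ⟪w - (α : ℂ) • ψ, w - (α : ℂ) • ψ⟫_ℂ = ((V + (E - α) ^ 2 : ℝ) : ℂ) := by
    simp only [inner_sub_left, inner_sub_right, inner_smul_left, inner_smul_right, hww, hwψ,
      hEc, hψ1, Complex.conj_ofReal, mul_one]
    push_cast
    ring
  have hnorm : ‖matApp (H - (α : ℂ) • 1) ψ‖ = N := by
    rw [hu, norm_eq_sqrt_re_inner (𝕜 := ℂ), huu]
    rw [RCLike.re_to_complex, Complex.ofReal_re, hNdef]
  have hne : matApp (H - (α : ℂ) • 1) ψ ≠ 0 := by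
    intro h
    rw [h, norm_zero] at hnorm
    exact hNpos.ne hnorm
  refine ⟨hne, ?_⟩
  -- trig values
  have hle1 : (E - α) / N ≤ 1 := by
    rw [div_le_one hNpos]
    nlinarith [hNsq, hV, hNpos]
  have hge1 : -1 ≤ (E - α) / N := by
    rw [neg_le, ← neg_div, div_le_one hNpos]
    nlinarith [hNsq, hV, hNpos]
  have hθval : θ = -Real.arccos ((E - α) / N) := by
    rw [hθdef, hsdef]
    field_simp
  have hcos : Real.cos θ = (E - α) / N := by
    rw [hθval, Real.cos_neg, Real.cos_arccos hge1 hle1]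
  have hsin : Real.sin θ = -(Real.sqrt V / N) := by
    rw [hθval, Real.sin_neg, Real.sin_arccos]
    have h1 : 1 - ((E - α) / N) ^ 2 = (Real.sqrt V / N) ^ 2 := by
      rw [div_pow, div_pow, hsqV]
      field_simp
      linear_combination hNsq
    rw [h1, Real.sqrt_sq (by positivity)]
  have hNC : ((N : ℝ) : ℂ) ≠ 0 := by exact_mod_cast hNpos.ne'
  rw [hval, hAψ, hnorm, hu, ← Complex.ofReal_cos, ← Complex.ofReal_sin, hcos, hsin]
  push_cast
  match_scalars
  · field_simp
    ring
  · field_simp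
end
end

section
/- Monotonicity and bound for the DB-QSP step duration: fix a real c > 0 (playing the role of |E_Ψ − z|) and define f : (0,∞) → ℝ by f(V) = (1/√V)·arccos( c / √(V + c²) ). Then f is monotone non-increasing on (0,∞), and f(V) ≤ 1/c for all V > 0. -/
noncomputable section

open Real

lemma arctan_nonneg' {x : ℝ} (hx : 0 ≤ x) : 0 ≤ Real.arctan x := by
  rw [← Real.arctan_zero]
  exact Real.arctan_strictMono.monotone hx

lemma arctan_le_self' {x : ℝ} (hx : 0 ≤ x) : Real.arctan x ≤ x := by
  have h := Real.le_tan (arctan_nonneg' hx) (Real.arctan_lt_pi_div_two x)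
  rwa [Real.tan_arctan] at h

lemma concave_arctan : ConcaveOn ℝ (Set.Ici (0:ℝ)) Real.arctan := by
  have hanti : AntitoneOn (deriv Real.arctan) (interior (Set.Ici (0:ℝ))) := by
    rw [interior_Ici]
    intro x hx y hy hxy
    rw [Real.deriv_arctan]
    have hx0 : (0:ℝ) < x := hx
    have hy0 : (0:ℝ) < y := hy
    have : x ^ 2 ≤ y ^ 2 := by nlinarith
    have h1 : (0:ℝ) < 1 + x ^ 2 := by nlinarith
    exact div_le_div_of_nonneg_left one_pos.le h1 (by linarith)
  exact hanti.concaveOn_of_deriv (convex_Ici 0) Real.continuous_arctan.continuousOn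
    Real.differentiable_arctan.differentiableOn

/-- `a * arctan b ≤ b * arctan a` for `0 < a ≤ b`. -/
lemma mul_arctan_le {a b : ℝ} (ha : 0 < a) (hab : a ≤ b) :
    a * Real.arctan b ≤ b * Real.arctan a := by
  have hb : 0 < b := ha.trans_le hab
  have key : (1 - a / b) • Real.arctan 0 + (a / b) • Real.arctan b ≤
      Real.arctan ((1 - a / b) • (0:ℝ) + (a / b) • b) :=
    concave_arctan.2 (Set.mem_Ici.mpr le_rfl) (Set.mem_Ici.mpr hb.le)
      (by
        have : a / b ≤ 1 := (div_le_one hb).mpr hab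
        linarith)
      (by positivity)
      (by ring)
  simp only [smul_eq_mul, mul_zero, zero_add, Real.arctan_zero] at key
  have h1 : a / b * b = a := div_mul_cancel₀ a hb.ne'
  rw [h1] at key
  calc a * Real.arctan b = b * (a / b * Real.arctan b) := by
        field_simp
    _ ≤ b * Real.arctan a := by
        apply mul_le_mul_of_nonneg_left _ hb.le
        linarith

lemma arccos_eq_arctan' {c V : ℝ} (hc : 0 < c) (hV : 0 < V) :
    Real.arccos (c / Real.sqrt (V + c ^ 2)) = Real.arctan (Real.sqrt V / c) := by
  have harg : c / Real.sqrt (V + c ^ 2) = Real.cos (Real.arctan (Real.sqrt V / c)) := by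
    rw [Real.cos_arctan]
    have h1 : (1:ℝ) + (Real.sqrt V / c) ^ 2 = (V + c ^ 2) / c ^ 2 := by
      rw [div_pow, Real.sq_sqrt hV.le]; field_simp; ring
    rw [h1, Real.sqrt_div (by positivity) (c ^ 2), Real.sqrt_sq hc.le, one_div_div]
  rw [harg, Real.arccos_cos (arctan_nonneg' (by positivity))
    ((Real.arctan_lt_pi_div_two _).le.trans (by linarith [Real.pi_pos]))]

/-- Monotonicity and bound for the DB-QSP step duration: for fixed `c > 0`,
the function `f(V) = (1/√V)·arccos(c/√(V + c²))` is monotone non-increasing on `(0,∞)`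
and satisfies `f(V) ≤ 1/c` for all `V > 0`. -/
theorem stepDuration_antitone_and_bounded (c : ℝ) (hc : 0 < c) :
    AntitoneOn (fun V : ℝ => (1 / Real.sqrt V) * Real.arccos (c / Real.sqrt (V + c ^ 2)))
      (Set.Ioi (0 : ℝ)) ∧
    ∀ V : ℝ, 0 < V →
      (1 / Real.sqrt V) * Real.arccos (c / Real.sqrt (V + c ^ 2)) ≤ 1 / c := by
  constructor
  · intro a ha b hb hab
    have ha0 : (0:ℝ) < a := ha
    have hb0 : (0:ℝ) < b := hb
    simp only
    rw [arccos_eq_arctan' hc ha0, arccos_eq_arctan' hc hb0]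
    have hsa : 0 < Real.sqrt a := Real.sqrt_pos.mpr ha0
    have hsb : 0 < Real.sqrt b := Real.sqrt_pos.mpr hb0
    set x := Real.sqrt a / c with hx
    set y := Real.sqrt b / c with hy
    have hx0 : 0 < x := by positivity
    have hxy : x ≤ y := by
      rw [hx, hy]
      gcongr
    have key := mul_arctan_le hx0 hxy
    have hsax : Real.sqrt a = c * x := by rw [hx]; field_simp
    have hsby : Real.sqrt b = c * y := by rw [hy]; field_simp
    rw [one_div_mul_eq_div, one_div_mul_eq_div, div_le_div_iff₀ hsb hsa,
      hsax, hsby]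
    nlinarith [key, hc]
  · intro V hV
    rw [arccos_eq_arctan' hc hV]
    have hs : 0 < Real.sqrt V := Real.sqrt_pos.mpr hV
    have h := arctan_le_self' (x := Real.sqrt V / c) (by positivity)
    calc 1 / Real.sqrt V * Real.arctan (Real.sqrt V / c)
        ≤ 1 / Real.sqrt V * (Real.sqrt V / c) := by
          exact mul_le_mul_of_nonneg_left h (by positivity)
      _ = 1 / c := by field_simp
end
end

section
/- QSP parametrization stability: let H be an n×n Hermitian complex matrix with ‖H‖ ≤ 1, let K ≥ 1, let θ_k, s_k and θ̃_k, s̃_k (k = 0,…,K−1) be real numbers with |s_k − s̃_k| ≤ δ_s and |θ_k − θ̃_k| ≤ δ_θ for all k, and let ζ > 0 satisfy |θ_k| ≤ ζ and |s_k| ≤ ζ for all k. Starting from the same unit vector ψ₀ = ψ̃₀ ∈ ℂ^n, define ψ_{k+1} = exp(iθ_k·Ψ_k)·exp(s_k·[Ψ_k,H])·ψ_k with Ψ_k = ψ_kψ_k†, and ψ̃_{k+1} = exp(iθ̃_k·Ψ̃_k)·exp(s̃_k·[Ψ̃_k,H])·ψ̃_k with Ψ̃_k = ψ̃_kψ̃_k†.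 Then ‖ψ_K − ψ̃_K‖ ≤ (1/(3ζ))·(1 + 6ζ)^K·max(δ_s, δ_θ). -/
open scoped InnerProductSpace
open Matrix

noncomputable section

namespace QSPaux

open NormedSpace

variable {n : ℕ}

local notation "E" => EuclideanSpace ℂ (Fin n)
local notation "CLM" => (EuclideanSpace ℂ (Fin n)) →L[ℂ] (EuclideanSpace ℂ (Fin n))

section L2
open scoped Matrix.Norms.L2Operator

lemma clm_cont : Continuous (Matrix.toEuclideanCLM (n := Fin n) (𝕜 := ℂ)) := by
  have : (Matrix.toEuclideanCLM (n := Fin n) (𝕜 := ℂ) : Matrix (Fin n) (Fin n) ℂ → _)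
      = fun A => (Matrix.toEuclideanLin.trans LinearMap.toContinuousLinearMap) A := rfl
  rw [this]
  exact LinearMap.continuous_of_finiteDimensional _

lemma expCLM (M : Matrix (Fin n) (Fin n) ℂ) :
    Matrix.toEuclideanCLM (𝕜 := ℂ) (exp M) = exp (Matrix.toEuclideanCLM (𝕜 := ℂ) M) :=
  by letI : NormedAlgebra ℚ (Matrix (Fin n) (Fin n) ℂ) := .restrictScalars ℚ ℂ _
     exact map_exp _ clm_cont M

end L2

lemma matApp_eq (M : Matrix (Fin n) (Fin n) ℂ) (v : E) :
    matApp M v = Matrix.toEuclideanCLM (𝕜 := ℂ) M v := rfl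

lemma matApp_exp (M : Matrix (Fin n) (Fin n) ℂ) (v : E) :
    matApp (exp M) v = exp (Matrix.toEuclideanCLM (𝕜 := ℂ) M) v := by
  exact congrArg (fun (T : CLM) => T v) (expCLM M)

lemma proj_apply (v w : E) :
    Matrix.toEuclideanCLM (𝕜 := ℂ) (outerProd v) w = ⟪v, w⟫_ℂ • v := by
  ext a
  refine (congrFun (Matrix.ofLp_toEuclideanCLM (𝕜 := ℂ) (outerProd v) w) a).trans ?_
  simp [outerProd, Matrix.toLin'_apply, Matrix.mulVec, dotProduct, PiLp.inner_apply,
    PiLp.smul_apply, Finset.mul_sum, Finset.sum_mul, smul_eq_mul]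
  ring_nf
  congr 1
  ext b
  ring

lemma proj_star (v : E) :
    star (Matrix.toEuclideanCLM (𝕜 := ℂ) (outerProd v))
      = Matrix.toEuclideanCLM (𝕜 := ℂ) (outerProd v) := by
  rw [← map_star]
  congr 1
  ext i j
  simp [outerProd, Matrix.conjTranspose_apply, mul_comm]

lemma proj_norm_le {v : E} (hv : ‖v‖ = 1) :
    ‖Matrix.toEuclideanCLM (𝕜 := ℂ) (outerProd v)‖ ≤ 1 := by
  refine ContinuousLinearMap.opNorm_le_bound _ zero_le_one fun w => ?_
  rw [proj_apply, norm_smul, hv, mul_one, one_mul]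
  simpa [hv] using norm_inner_le_norm (𝕜 := ℂ) v w

lemma proj_diff_norm_le {v v' : E} (hv : ‖v‖ = 1) (hv' : ‖v'‖ = 1) :
    ‖Matrix.toEuclideanCLM (𝕜 := ℂ) (outerProd v)
      - Matrix.toEuclideanCLM (𝕜 := ℂ) (outerProd v')‖ ≤ 2 * ‖v - v'‖ := by
  refine ContinuousLinearMap.opNorm_le_bound _ (by positivity) fun w => ?_
  rw [ContinuousLinearMap.sub_apply, proj_apply, proj_apply]
  have hrw : ⟪v, w⟫_ℂ • v - ⟪v', w⟫_ℂ • v'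
      = ⟪v - v', w⟫_ℂ • v + ⟪v', w⟫_ℂ • (v - v') := by
    rw [inner_sub_left]; module
  rw [hrw]
  have h1 : ‖⟪v - v', w⟫_ℂ • v‖ ≤ ‖v - v'‖ * ‖w‖ := by
    rw [norm_smul, hv, mul_one]; exact norm_inner_le_norm _ _
  have h2 : ‖⟪v', w⟫_ℂ • (v - v')‖ ≤ ‖w‖ * ‖v - v'‖ := by
    rw [norm_smul]
    have := norm_inner_le_norm (𝕜 := ℂ) v' w
    rw [hv', one_mul] at this
    exact mul_le_mul_of_nonneg_right this (norm_nonneg _)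
  calc ‖⟪v - v', w⟫_ℂ • v + ⟪v', w⟫_ℂ • (v - v')‖
      ≤ ‖⟪v - v', w⟫_ℂ • v‖ + ‖⟪v', w⟫_ℂ • (v - v')‖ := norm_add_le _ _
    _ ≤ ‖v - v'‖ * ‖w‖ + ‖w‖ * ‖v - v'‖ := add_le_add h1 h2
    _ = 2 * ‖v - v'‖ * ‖w‖ := by ring


open NormedSpace in
lemma helper1 {M : Type*} [AddCommGroup M] [Module ℂ M] (a b : ℂ) (T T' : M) :
    a • T - b • T' = (a - b) • T' + a • (T - T') := by module

lemma ring_id {R : Type*} [Ring R] (p q h : R) :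
    (p * h - h * p) - (q * h - h * q) = (p - q) * h - h * (p - q) := by noncomm_ring

end QSPaux
open NormedSpace
set_option maxHeartbeats 1000000
set_option synthInstance.maxHeartbeats 1000000
namespace QSPaux2
variable {n : ℕ}
local notation "E" => EuclideanSpace ℂ (Fin n)
local notation "CLM" => (EuclideanSpace ℂ (Fin n)) →L[ℂ] (EuclideanSpace ℂ (Fin n))

lemma nontrivial_clm (hn : 1 ≤ n) : Nontrivial CLM := by
  have hv : (EuclideanSpace.single (⟨0, hn⟩ : Fin n) (1 : ℂ)) ≠ 0 := by
    intro h
    have := congrArg norm h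
    rw [EuclideanSpace.norm_single, norm_zero] at this
    simp at this
  refine ⟨1, 0, fun h => hv ?_⟩
  have := ContinuousLinearMap.ext_iff.mp h (EuclideanSpace.single (⟨0, hn⟩ : Fin n) (1 : ℂ))
  simpa using this

lemma norm_exp_skew (hn : 1 ≤ n) {X : CLM} (hX : X ∈ skewAdjoint CLM) :
    ‖exp X‖ = 1 := by
  haveI := nontrivial_clm hn
  letI : NormedAlgebra ℚ CLM := .restrictScalars ℚ ℂ CLM
  exact CStarRing.norm_of_mem_unitary (exp_mem_unitary_of_mem_skewAdjoint hX)

lemma exp_skew_apply_norm (hn : 1 ≤ n) {X : CLM} (hX : X ∈ skewAdjoint CLM) (v : E) :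
    ‖exp X v‖ = ‖v‖ := by
  haveI := nontrivial_clm hn
  letI : NormedAlgebra ℚ CLM := .restrictScalars ℚ ℂ CLM
  set u := exp X with hu
  have humem : u ∈ unitary CLM := exp_mem_unitary_of_mem_skewAdjoint hX
  have h1 : star u * u = 1 := (Unitary.mem_iff.mp humem).1
  refine le_antisymm ?_ ?_
  · calc ‖u v‖ ≤ ‖u‖ * ‖v‖ := u.le_opNorm v
      _ = ‖v‖ := by rw [hu, norm_exp_skew hn hX, one_mul]
  · have h2 : (star u) (u v) = v := by
      have := ContinuousLinearMap.ext_iff.mp h1 v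
      simpa [ContinuousLinearMap.mul_apply] using this
    calc ‖v‖ = ‖(star u) (u v)‖ := by rw [h2]
      _ ≤ ‖star u‖ * ‖u v‖ := (star u).le_opNorm _
      _ = ‖u v‖ := by
          rw [CStarRing.norm_of_mem_unitary (Unitary.star_mem humem), one_mul]

lemma smul_skew (t : ℝ) {X : CLM} (hX : X ∈ skewAdjoint CLM) :
    t • X ∈ skewAdjoint CLM := by
  rw [skewAdjoint.mem_iff] at hX ⊢
  rw [← algebraMap_smul ℂ t X, star_smul, hX, smul_neg]
  simp

lemma expR_eq (Z : CLM) : exp Z = exp Z := by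
  rfl

lemma exp_lip (hn : 1 ≤ n) {X Y : CLM} (hX : X ∈ skewAdjoint CLM)
    (hY : Y ∈ skewAdjoint CLM) : ‖exp X - exp Y‖ ≤ ‖X - Y‖ := by
  rw [← expR_eq, ← expR_eq]
  set f : ℝ → CLM := fun t => exp (t • X) * exp ((1 - t) • Y) with hf
  set g : ℝ → CLM := fun t => exp (t • X) * (X - Y) * exp ((1 - t) • Y) with hg
  have hderiv : ∀ t : ℝ, HasDerivAt f (g t) t := by
    intro t
    have h1 : HasDerivAt (fun t : ℝ => exp (t • X)) (exp (t • X) * X) t :=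
      hasDerivAt_exp_smul_const X t
    have h3 : HasDerivAt (fun u : ℝ => exp (u • Y)) (Y * exp ((1 - t) • Y)) (1 - t) :=
      hasDerivAt_exp_smul_const' Y (1 - t)
    have h4 : HasDerivAt (fun t : ℝ => 1 - t) (-1) t := by
      simpa using (hasDerivAt_id t).const_sub 1
    have h2 : HasDerivAt (fun t : ℝ => exp ((1 - t) • Y))
        ((-1 : ℝ) • (Y * exp ((1 - t) • Y))) t := h3.scomp t h4
    have := h1.mul h2
    refine this.congr_deriv ?_
    simp only [hg]
    rw [neg_one_smul ℝ (Y * exp ((1 - t) • Y))]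
    noncomm_ring
  have hbound : ∀ t ∈ Set.Ico (0 : ℝ) 1, ‖g t‖ ≤ ‖X - Y‖ := by
    intro t _
    have e1 : ‖exp (t • X)‖ = 1 := by
      rw [expR_eq]; exact norm_exp_skew hn (smul_skew t hX)
    have e2 : ‖exp ((1 - t) • Y)‖ = 1 := by
      rw [expR_eq]; exact norm_exp_skew hn (smul_skew (1 - t) hY)
    calc ‖exp (t • X) * (X - Y) * exp ((1 - t) • Y)‖
        ≤ ‖exp (t • X) * (X - Y)‖ * ‖exp ((1 - t) • Y)‖ := norm_mul_le _ _
      _ ≤ ‖exp (t • X)‖ * ‖X - Y‖ * ‖exp ((1 - t) • Y)‖ :=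
          mul_le_mul_of_nonneg_right (norm_mul_le _ _) (norm_nonneg _)
      _ = ‖X - Y‖ := by rw [e1, e2, one_mul, mul_one]
  have hmain : ‖f 1 - f 0‖ ≤ ‖X - Y‖ := by
    refine norm_image_sub_le_of_norm_deriv_le_segment_01'
      (fun t _ => (hderiv t).hasDerivWithinAt) (fun t ht => hbound t ht)
  have hf1 : f 1 = exp X := by
    show exp ((1:ℝ) • X) * exp ((1 - 1 : ℝ) • Y) = exp X
    rw [show (1:ℝ) • X = X from one_smul ℝ X, sub_self,
      show (0:ℝ) • Y = 0 from zero_smul ℝ Y, exp_zero, mul_one]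
  have hf0 : f 0 = exp Y := by
    show exp ((0:ℝ) • X) * exp ((1 - 0 : ℝ) • Y) = exp Y
    rw [show (0:ℝ) • X = 0 from zero_smul ℝ X, sub_zero,
      show (1:ℝ) • Y = Y from one_smul ℝ Y, exp_zero, one_mul]
  rwa [hf1, hf0] at hmain

end QSPaux2
namespace QSPaux3
open QSPaux QSPaux2 NormedSpace
open scoped InnerProductSpace
variable {n : ℕ}
local notation "E" => EuclideanSpace ℂ (Fin n)
local notation "CLM" => (EuclideanSpace ℂ (Fin n)) →L[ℂ] (EuclideanSpace ℂ (Fin n))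
set_option maxHeartbeats 1000000
set_option synthInstance.maxHeartbeats 1000000

lemma comm_apply (Hc : CLM) (ψ w : E) :
    (Matrix.toEuclideanCLM (𝕜 := ℂ) (outerProd ψ) * Hc
      - Hc * Matrix.toEuclideanCLM (𝕜 := ℂ) (outerProd ψ)) w
    = ⟪ψ, Hc w⟫_ℂ • ψ - ⟪ψ, w⟫_ℂ • (Hc ψ) := by
  rw [ContinuousLinearMap.sub_apply, ContinuousLinearMap.mul_apply,
    ContinuousLinearMap.mul_apply, proj_apply, proj_apply, _root_.map_smul]

lemma comm_norm_le (Hc : CLM) (hHs : star Hc = Hc) (hHn : ‖Hc‖ ≤ 1)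
    {ψ : E} (hψ : ‖ψ‖ = 1) :
    ‖Matrix.toEuclideanCLM (𝕜 := ℂ) (outerProd ψ) * Hc
      - Hc * Matrix.toEuclideanCLM (𝕜 := ℂ) (outerProd ψ)‖ ≤ 1 := by
  refine ContinuousLinearMap.opNorm_le_bound _ zero_le_one fun w => ?_
  rw [comm_apply]
  have hadj : ∀ x y : E, ⟪Hc x, y⟫_ℂ = ⟪x, Hc y⟫_ℂ := by
    intro x y
    rw [← ContinuousLinearMap.adjoint_inner_left]
    congr 1
    rw [← ContinuousLinearMap.star_eq_adjoint, hHs]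
  set u : E := Hc ψ with hu
  have h1 : ⟪ψ, Hc w⟫_ℂ = ⟪u, w⟫_ℂ := (hadj ψ w).symm
  set a : ℂ := ⟪ψ, u⟫_ℂ with ha
  have hareal : (starRingEnd ℂ) a = a := by
    rw [ha, inner_conj_symm]
    exact hadj ψ ψ
  have hinner_self : ⟪ψ, ψ⟫_ℂ = 1 := by
    rw [inner_self_eq_norm_sq_to_K, hψ]; norm_num
  set u' : E := u - a • ψ with hu'
  have hpu' : ⟪ψ, u'⟫_ℂ = 0 := by
    rw [hu', inner_sub_right, inner_smul_right, hinner_self, mul_one, ← ha, sub_self]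
  have hu'p : ⟪u', ψ⟫_ℂ = 0 := by
    rw [← inner_conj_symm, hpu', map_zero]
  set α : ℂ := ⟪ψ, w⟫_ℂ with hα
  have hTw : ⟪ψ, Hc w⟫_ℂ • ψ - ⟪ψ, w⟫_ℂ • u = ⟪u', w⟫_ℂ • ψ - α • u' := by
    rw [h1, show u = u' + a • ψ from by rw [hu', sub_add_cancel], inner_add_left,
      inner_smul_left, hareal]
    rw [← hα]
    module
  rw [hTw]
  have horth : ⟪⟪u', w⟫_ℂ • ψ, α • u'⟫_ℂ = 0 := by
    rw [inner_smul_left, inner_smul_right, hpu']; ring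
  have hpyth : ‖⟪u', w⟫_ℂ • ψ - α • u'‖ ^ 2 = ‖⟪u', w⟫_ℂ‖ ^ 2 + ‖α‖ ^ 2 * ‖u'‖ ^ 2 := by
    have h := @norm_sub_sq ℂ _ _ _ _ (⟪u', w⟫_ℂ • ψ) (α • u')
    rw [horth] at h
    simp only [map_zero, mul_zero, sub_zero] at h
    rw [h, norm_smul, norm_smul, hψ]
    ring
  have hCS : ‖⟪u', w⟫_ℂ‖ ≤ ‖u'‖ * ‖w - α • ψ‖ := by
    have h2 : ⟪u', w⟫_ℂ = ⟪u', w - α • ψ⟫_ℂ := by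
      rw [inner_sub_right, inner_smul_right, hu'p, mul_zero, sub_zero]
    rw [h2]
    exact norm_inner_le_norm _ _
  have hw2 : ‖w - α • ψ‖ ^ 2 = ‖w‖ ^ 2 - ‖α‖ ^ 2 := by
    have h := @norm_sub_sq ℂ _ _ _ _ w (α • ψ)
    have h3 : ⟪w, α • ψ⟫_ℂ = α * (starRingEnd ℂ) α := by
      rw [inner_smul_right, ← inner_conj_symm, ← hα]
    have h4 : RCLike.re ⟪w, α • ψ⟫_ℂ = ‖α‖ ^ 2 := by
      rw [h3, Complex.mul_conj]
      rw [show RCLike.re ((Complex.normSq α : ℝ) : ℂ) = Complex.normSq α from Complex.ofReal_re _]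
      rw [← Complex.sq_norm]
    rw [h4, norm_smul, hψ] at h
    rw [h]; ring
  have huorth : ⟪u', a • ψ⟫_ℂ = 0 := by
    rw [inner_smul_right, hu'p, mul_zero]
  have hunorm : ‖u‖ ^ 2 = ‖u'‖ ^ 2 + ‖a‖ ^ 2 := by
    have h := @norm_add_sq ℂ _ _ _ _ u' (a • ψ)
    rw [huorth] at h
    simp only [map_zero, mul_zero, add_zero] at h
    rw [show u' + a • ψ = u from by rw [hu', sub_add_cancel]] at h
    rw [h, norm_smul, hψ]; ring
  have huone : ‖u‖ ≤ 1 := by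
    calc ‖u‖ ≤ ‖Hc‖ * ‖ψ‖ := Hc.le_opNorm ψ
      _ ≤ 1 := by rw [hψ, mul_one]; exact hHn
  have hu'one : ‖u'‖ ≤ 1 := by nlinarith [norm_nonneg u', norm_nonneg a, norm_nonneg u]
  have hCS2 : ‖⟪u', w⟫_ℂ‖ ^ 2 ≤ ‖u'‖ ^ 2 * ‖w - α • ψ‖ ^ 2 := by
    nlinarith [norm_nonneg (⟪u', w⟫_ℂ), norm_nonneg u', norm_nonneg (w - α • ψ)]
  have hCS3 : ‖⟪u', w⟫_ℂ‖ ^ 2 ≤ ‖u'‖ ^ 2 * (‖w‖ ^ 2 - ‖α‖ ^ 2) := by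
    rw [← hw2]; exact hCS2
  have h6 : ‖u'‖ ^ 2 ≤ 1 := by nlinarith [norm_nonneg u']
  have h7 : ‖u'‖ ^ 2 * ‖w‖ ^ 2 ≤ ‖w‖ ^ 2 := by nlinarith [sq_nonneg ‖w‖]
  have hsq : ‖⟪u', w⟫_ℂ • ψ - α • u'‖ ^ 2 ≤ ‖w‖ ^ 2 := by
    rw [hpyth]; nlinarith [hCS3, h7]
  rw [one_mul]
  nlinarith [hsq, norm_nonneg (⟪u', w⟫_ℂ • ψ - α • u'), norm_nonneg w]

lemma comm_diff (Hc : CLM) (hHn : ‖Hc‖ ≤ 1) (ψ ψ' : E) :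
    ‖(Matrix.toEuclideanCLM (𝕜 := ℂ) (outerProd ψ) * Hc
        - Hc * Matrix.toEuclideanCLM (𝕜 := ℂ) (outerProd ψ))
      - (Matrix.toEuclideanCLM (𝕜 := ℂ) (outerProd ψ') * Hc
        - Hc * Matrix.toEuclideanCLM (𝕜 := ℂ) (outerProd ψ'))‖
    ≤ 2 * ‖Matrix.toEuclideanCLM (𝕜 := ℂ) (outerProd ψ)
        - Matrix.toEuclideanCLM (𝕜 := ℂ) (outerProd ψ')‖ := by
  rw [ring_id]
  have h1 : ‖(Matrix.toEuclideanCLM (𝕜 := ℂ) (outerProd ψ)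
      - Matrix.toEuclideanCLM (𝕜 := ℂ) (outerProd ψ')) * Hc‖
      ≤ ‖Matrix.toEuclideanCLM (𝕜 := ℂ) (outerProd ψ)
      - Matrix.toEuclideanCLM (𝕜 := ℂ) (outerProd ψ')‖ * ‖Hc‖ := norm_mul_le _ _
  have h2 : ‖Hc * (Matrix.toEuclideanCLM (𝕜 := ℂ) (outerProd ψ)
      - Matrix.toEuclideanCLM (𝕜 := ℂ) (outerProd ψ'))‖
      ≤ ‖Hc‖ * ‖Matrix.toEuclideanCLM (𝕜 := ℂ) (outerProd ψ)
      - Matrix.toEuclideanCLM (𝕜 := ℂ) (outerProd ψ')‖ := norm_mul_le _ _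
  have h3 := norm_sub_le ((Matrix.toEuclideanCLM (𝕜 := ℂ) (outerProd ψ)
      - Matrix.toEuclideanCLM (𝕜 := ℂ) (outerProd ψ')) * Hc)
      (Hc * (Matrix.toEuclideanCLM (𝕜 := ℂ) (outerProd ψ)
      - Matrix.toEuclideanCLM (𝕜 := ℂ) (outerProd ψ')))
  have h4 := norm_nonneg (Matrix.toEuclideanCLM (𝕜 := ℂ) (outerProd ψ)
      - Matrix.toEuclideanCLM (𝕜 := ℂ) (outerProd ψ'))
  have h5 := norm_nonneg Hc
  nlinarith

lemma outer_star (v : E) : star (outerProd v) = outerProd v := by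
  ext i j
  simp [outerProd, Matrix.star_eq_conjTranspose, Matrix.conjTranspose_apply, mul_comm]

lemma skewA (θ : ℝ) (v : E) :
    (Complex.I * (θ : ℂ)) • Matrix.toEuclideanCLM (𝕜 := ℂ) (outerProd v)
      ∈ skewAdjoint CLM := by
  rw [skewAdjoint.mem_iff, ← _root_.map_smul, ← map_star, ← map_neg]
  congr 1
  rw [Matrix.star_eq_conjTranspose, Matrix.conjTranspose_smul,
    ← Matrix.star_eq_conjTranspose, outer_star]
  rw [show star (Complex.I * (θ : ℂ)) = -(Complex.I * (θ : ℂ)) from by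
    simp [Complex.star_def, _root_.map_mul, Complex.conj_I, Complex.conj_ofReal, neg_mul]]
  rw [neg_smul]

lemma skewB (s : ℝ) (H : Matrix (Fin n) (Fin n) ℂ) (hHs : star H = H) (v : E) :
    ((s : ℝ) : ℂ) • (Matrix.toEuclideanCLM (𝕜 := ℂ) (outerProd v)
          * Matrix.toEuclideanCLM (𝕜 := ℂ) H
        - Matrix.toEuclideanCLM (𝕜 := ℂ) H
          * Matrix.toEuclideanCLM (𝕜 := ℂ) (outerProd v))
      ∈ skewAdjoint CLM := by
  rw [skewAdjoint.mem_iff, ← _root_.map_mul, ← _root_.map_mul, ← map_sub, ← _root_.map_smul,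
    ← map_star, ← map_neg]
  congr 1
  rw [Matrix.star_eq_conjTranspose, Matrix.conjTranspose_smul, Matrix.conjTranspose_sub,
    Matrix.conjTranspose_mul, Matrix.conjTranspose_mul,
    ← Matrix.star_eq_conjTranspose (outerProd v), outer_star]
  rw [show Hᴴ * (outerProd v) - (outerProd v) * Hᴴ
      = -((outerProd v) * H - H * (outerProd v)) from by
    rw [← Matrix.star_eq_conjTranspose, hHs]; noncomm_ring]
  rw [show star ((s : ℝ) : ℂ) = ((s : ℝ) : ℂ) from by
    simp [Complex.star_def, Complex.conj_ofReal]]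
  rw [smul_neg]

end QSPaux3
namespace QSPaux4
open QSPaux QSPaux2 QSPaux3 NormedSpace
open scoped InnerProductSpace
variable {n : ℕ}
local notation "E" => EuclideanSpace ℂ (Fin n)
local notation "CLM" => (EuclideanSpace ℂ (Fin n)) →L[ℂ] (EuclideanSpace ℂ (Fin n))
set_option maxHeartbeats 1000000
set_option synthInstance.maxHeartbeats 1000000

lemma norm_real_coe (r : ℝ) : ‖((r : ℝ) : ℂ)‖ = |r| := by
  rw [Complex.norm_real, Real.norm_eq_abs]

lemma step (hn : 1 ≤ n) (H : Matrix (Fin n) (Fin n) ℂ) (hHs : star H = H)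
    (hHn : ‖Matrix.toEuclideanCLM (𝕜 := ℂ) H‖ ≤ 1)
    (ψ ψ' : E) (hψ : ‖ψ‖ = 1) (hψ' : ‖ψ'‖ = 1)
    (θ θ' s s' ζ : ℝ) (hθ : |θ| ≤ ζ) (hs : |s| ≤ ζ) :
    ‖exp ((Complex.I * (θ : ℂ)) • Matrix.toEuclideanCLM (𝕜 := ℂ) (outerProd ψ))
        (exp (((s : ℝ) : ℂ) • (Matrix.toEuclideanCLM (𝕜 := ℂ) (outerProd ψ)
            * Matrix.toEuclideanCLM (𝕜 := ℂ) H
          - Matrix.toEuclideanCLM (𝕜 := ℂ) H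
            * Matrix.toEuclideanCLM (𝕜 := ℂ) (outerProd ψ))) ψ)
      - exp ((Complex.I * (θ' : ℂ)) • Matrix.toEuclideanCLM (𝕜 := ℂ) (outerProd ψ'))
        (exp (((s' : ℝ) : ℂ) • (Matrix.toEuclideanCLM (𝕜 := ℂ) (outerProd ψ')
            * Matrix.toEuclideanCLM (𝕜 := ℂ) H
          - Matrix.toEuclideanCLM (𝕜 := ℂ) H
            * Matrix.toEuclideanCLM (𝕜 := ℂ) (outerProd ψ'))) ψ')‖
    ≤ (1 + 6 * ζ) * ‖ψ - ψ'‖ + |s - s'| + |θ - θ'| := by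
  have hζ0 : 0 ≤ ζ := le_trans (abs_nonneg θ) hθ
  set Hc : CLM := Matrix.toEuclideanCLM (𝕜 := ℂ) H with hHc
  have hHsc : star Hc = Hc := by rw [hHc, ← map_star, hHs]
  set P : CLM := Matrix.toEuclideanCLM (𝕜 := ℂ) (outerProd ψ) with hP
  set P' : CLM := Matrix.toEuclideanCLM (𝕜 := ℂ) (outerProd ψ') with hP'
  set A1 : CLM := (Complex.I * (θ : ℂ)) • P with hA1d
  set A2 : CLM := (Complex.I * (θ' : ℂ)) • P' with hA2d
  set T : CLM := P * Hc - Hc * P with hTd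
  set T' : CLM := P' * Hc - Hc * P' with hT'd
  set B1 : CLM := ((s : ℝ) : ℂ) • T with hB1d
  set B2 : CLM := ((s' : ℝ) : ℂ) • T' with hB2d
  have hA1 : A1 ∈ skewAdjoint CLM := skewA θ ψ
  have hA2 : A2 ∈ skewAdjoint CLM := skewA θ' ψ'
  have hB1 : B1 ∈ skewAdjoint CLM := skewB s H hHs ψ
  have hB2 : B2 ∈ skewAdjoint CLM := skewB s' H hHs ψ'
  have hPP' : ‖P - P'‖ ≤ 2 * ‖ψ - ψ'‖ := proj_diff_norm_le hψ hψ'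
  have hT' : ‖T'‖ ≤ 1 := comm_norm_le Hc hHsc hHn hψ'
  have hTT' : ‖T - T'‖ ≤ 2 * ‖P - P'‖ := comm_diff Hc hHn ψ ψ'
  have he0 : (0:ℝ) ≤ ‖ψ - ψ'‖ := norm_nonneg _
  -- bound on B1 - B2
  have hBB : ‖B1 - B2‖ ≤ |s - s'| + 4 * ζ * ‖ψ - ψ'‖ := by
    have e1 : B1 - B2 = (((s : ℝ) : ℂ) - ((s' : ℝ) : ℂ)) • T' + ((s : ℝ) : ℂ) • (T - T') :=
      helper1 _ _ _ _
    have b1 : ‖(((s : ℝ) : ℂ) - ((s' : ℝ) : ℂ)) • T'‖ ≤ |s - s'| := by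
      calc ‖(((s : ℝ) : ℂ) - ((s' : ℝ) : ℂ)) • T'‖
          ≤ ‖((s : ℝ) : ℂ) - ((s' : ℝ) : ℂ)‖ * ‖T'‖ := ContinuousLinearMap.opNorm_smul_le _ _
        _ = |s - s'| * ‖T'‖ := by
            rw [show ((s : ℝ) : ℂ) - ((s' : ℝ) : ℂ) = (((s - s' : ℝ)) : ℂ) from by
              push_cast; ring, norm_real_coe]
        _ ≤ |s - s'| * 1 := mul_le_mul_of_nonneg_left hT' (abs_nonneg _)
        _ = |s - s'| := mul_one _
    have b2 : ‖((s : ℝ) : ℂ) • (T - T')‖ ≤ 4 * ζ * ‖ψ - ψ'‖ := by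
      have hTT4 : ‖T - T'‖ ≤ 4 * ‖ψ - ψ'‖ := by linarith
      calc ‖((s : ℝ) : ℂ) • (T - T')‖ ≤ ‖((s : ℝ) : ℂ)‖ * ‖T - T'‖ :=
            ContinuousLinearMap.opNorm_smul_le _ _
        _ = |s| * ‖T - T'‖ := by rw [norm_real_coe]
        _ ≤ ζ * (4 * ‖ψ - ψ'‖) := mul_le_mul hs hTT4 (norm_nonneg _) hζ0
        _ = 4 * ζ * ‖ψ - ψ'‖ := by ring
    calc ‖B1 - B2‖ ≤ ‖(((s : ℝ) : ℂ) - ((s' : ℝ) : ℂ)) • T'‖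
          + ‖((s : ℝ) : ℂ) • (T - T')‖ := by rw [e1]; exact norm_add_le _ _
      _ ≤ |s - s'| + 4 * ζ * ‖ψ - ψ'‖ := add_le_add b1 b2
  -- bound on A1 - A2
  have hAA : ‖A1 - A2‖ ≤ |θ - θ'| + 2 * ζ * ‖ψ - ψ'‖ := by
    have e1 : A1 - A2 = ((Complex.I * (θ : ℂ)) - (Complex.I * (θ' : ℂ))) • P'
        + (Complex.I * (θ : ℂ)) • (P - P') := helper1 _ _ _ _
    have hP'1 : ‖P'‖ ≤ 1 := proj_norm_le hψ'
    have hnormI : ∀ x : ℝ, ‖Complex.I * (x : ℂ)‖ = |x| := by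
      intro x
      rw [norm_mul, Complex.norm_I, one_mul, norm_real_coe]
    have b1 : ‖((Complex.I * (θ : ℂ)) - (Complex.I * (θ' : ℂ))) • P'‖ ≤ |θ - θ'| := by
      calc ‖((Complex.I * (θ : ℂ)) - (Complex.I * (θ' : ℂ))) • P'‖
          ≤ ‖(Complex.I * (θ : ℂ)) - (Complex.I * (θ' : ℂ))‖ * ‖P'‖ :=
            ContinuousLinearMap.opNorm_smul_le _ _
        _ = |θ - θ'| * ‖P'‖ := by
            rw [show (Complex.I * (θ : ℂ)) - (Complex.I * (θ' : ℂ))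
              = Complex.I * (((θ - θ' : ℝ)) : ℂ) from by push_cast; ring, hnormI]
        _ ≤ |θ - θ'| * 1 := mul_le_mul_of_nonneg_left hP'1 (abs_nonneg _)
        _ = |θ - θ'| := mul_one _
    have b2 : ‖(Complex.I * (θ : ℂ)) • (P - P')‖ ≤ 2 * ζ * ‖ψ - ψ'‖ := by
      calc ‖(Complex.I * (θ : ℂ)) • (P - P')‖
          ≤ ‖Complex.I * (θ : ℂ)‖ * ‖P - P'‖ := ContinuousLinearMap.opNorm_smul_le _ _
        _ = |θ| * ‖P - P'‖ := by rw [hnormI]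
        _ ≤ ζ * (2 * ‖ψ - ψ'‖) := mul_le_mul hθ hPP' (norm_nonneg _) hζ0
        _ = 2 * ζ * ‖ψ - ψ'‖ := by ring
    calc ‖A1 - A2‖ ≤ ‖((Complex.I * (θ : ℂ)) - (Complex.I * (θ' : ℂ))) • P'‖
          + ‖(Complex.I * (θ : ℂ)) • (P - P')‖ := by rw [e1]; exact norm_add_le _ _
      _ ≤ |θ - θ'| + 2 * ζ * ‖ψ - ψ'‖ := add_le_add b1 b2
  -- exp differences
  have hexpA : ‖exp A1 - exp A2‖ ≤ ‖A1 - A2‖ := exp_lip hn hA1 hA2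
  have hexpB : ‖exp B1 - exp B2‖ ≤ ‖B1 - B2‖ := exp_lip hn hB1 hB2
  -- decomposition
  set x : E := exp B1 ψ with hx
  set x' : E := exp B2 ψ' with hx'
  have hx'1 : ‖x'‖ = 1 := by rw [hx', exp_skew_apply_norm hn hB2, hψ']
  have d1 : ‖x - x'‖ ≤ ‖ψ - ψ'‖ + ‖B1 - B2‖ := by
    have hsplit : x - x' = (exp B1 ψ - exp B1 ψ') + (exp B1 ψ' - exp B2 ψ') := by
      rw [hx, hx']; abel
    have q1 : ‖exp B1 ψ - exp B1 ψ'‖ = ‖ψ - ψ'‖ := by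
      rw [← map_sub, exp_skew_apply_norm hn hB1]
    have q2 : ‖exp B1 ψ' - exp B2 ψ'‖ ≤ ‖B1 - B2‖ := by
      rw [← ContinuousLinearMap.sub_apply]
      calc ‖(exp B1 - exp B2) ψ'‖ ≤ ‖exp B1 - exp B2‖ * ‖ψ'‖ :=
            ContinuousLinearMap.le_opNorm _ _
        _ = ‖exp B1 - exp B2‖ := by rw [hψ', mul_one]
        _ ≤ ‖B1 - B2‖ := hexpB
    calc ‖x - x'‖ ≤ ‖exp B1 ψ - exp B1 ψ'‖ + ‖exp B1 ψ' - exp B2 ψ'‖ := by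
          rw [hsplit]; exact norm_add_le _ _
      _ ≤ ‖ψ - ψ'‖ + ‖B1 - B2‖ := by rw [q1]; exact add_le_add_right q2 _
  have d2 : ‖exp A1 x - exp A2 x'‖ ≤ ‖x - x'‖ + ‖A1 - A2‖ := by
    have hsplit : exp A1 x - exp A2 x'
        = (exp A1 x - exp A1 x') + (exp A1 x' - exp A2 x') := by abel
    have q1 : ‖exp A1 x - exp A1 x'‖ = ‖x - x'‖ := by
      rw [← map_sub, exp_skew_apply_norm hn hA1]
    have q2 : ‖exp A1 x' - exp A2 x'‖ ≤ ‖A1 - A2‖ := by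
      rw [← ContinuousLinearMap.sub_apply]
      calc ‖(exp A1 - exp A2) x'‖ ≤ ‖exp A1 - exp A2‖ * ‖x'‖ :=
            ContinuousLinearMap.le_opNorm _ _
        _ = ‖exp A1 - exp A2‖ := by rw [hx'1, mul_one]
        _ ≤ ‖A1 - A2‖ := hexpA
    calc ‖exp A1 x - exp A2 x'‖
        ≤ ‖exp A1 x - exp A1 x'‖ + ‖exp A1 x' - exp A2 x'‖ := by
          rw [hsplit]; exact norm_add_le _ _
      _ ≤ ‖x - x'‖ + ‖A1 - A2‖ := by rw [q1]; exact add_le_add_right q2 _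
  calc ‖exp A1 x - exp A2 x'‖ ≤ ‖x - x'‖ + ‖A1 - A2‖ := d2
    _ ≤ (‖ψ - ψ'‖ + ‖B1 - B2‖) + ‖A1 - A2‖ := by linarith
    _ ≤ (1 + 6 * ζ) * ‖ψ - ψ'‖ + |s - s'| + |θ - θ'| := by
        have := hBB; have := hAA; linarith

end QSPaux4
open QSPaux QSPaux2 QSPaux3 QSPaux4 NormedSpace in
/-- QSP parametrization stability: if the phases and durations are
perturbed by at most `δ_θ` and `δ_s` per step, then
`‖ψ_K − ψ̃_K‖ ≤ (1/(3ζ))·(1 + 6ζ)^K·max(δ_s, δ_θ)`. -/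
theorem qsp_parametrization_stability {n : ℕ} (hn : 1 ≤ n)
    (H : Matrix (Fin n) (Fin n) ℂ) (hH : H.IsHermitian)
    (hHnorm : ‖Matrix.toEuclideanCLM (𝕜 := ℂ) H‖ ≤ 1)
    (K : ℕ) (hK : 1 ≤ K)
    (θ s θt st : ℕ → ℝ) (δs δθ : ℝ)
    (hδs : ∀ k < K, |s k - st k| ≤ δs) (hδθ : ∀ k < K, |θ k - θt k| ≤ δθ)
    (ζ : ℝ) (hζ : 0 < ζ)
    (hθζ : ∀ k < K, |θ k| ≤ ζ) (hsζ : ∀ k < K, |s k| ≤ ζ)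
    (ψ ψt : ℕ → EuclideanSpace ℂ (Fin n))
    (hinit : ψ 0 = ψt 0) (hunit : ‖ψ 0‖ = 1)
    (hψ : ∀ k < K, ψ (k + 1)
      = matApp (NormedSpace.exp ((Complex.I * (θ k : ℂ)) • outerProd (ψ k)))
          (matApp (NormedSpace.exp
              (((s k : ℝ) : ℂ) • (outerProd (ψ k) * H - H * outerProd (ψ k)))) (ψ k)))
    (hψt : ∀ k < K, ψt (k + 1)
      = matApp (NormedSpace.exp ((Complex.I * (θt k : ℂ)) • outerProd (ψt k)))
          (matApp (NormedSpace.exp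
              (((st k : ℝ) : ℂ) • (outerProd (ψt k) * H - H * outerProd (ψt k)))) (ψt k))) :
    ‖ψ K - ψt K‖ ≤ (1 / (3 * ζ)) * (1 + 6 * ζ) ^ K * max δs δθ := by
  have hHs : star H = H := hH
  have hKpos : 0 < K := hK
  have hδs0 : (0:ℝ) ≤ δs := le_trans (abs_nonneg _) (hδs 0 hKpos)
  have hδθ0 : (0:ℝ) ≤ δθ := le_trans (abs_nonneg _) (hδθ 0 hKpos)
  -- rewrite the recursions at the level of continuous linear maps
  have hrec : ∀ k < K, ψ (k + 1)
      = exp ((Complex.I * (θ k : ℂ)) • Matrix.toEuclideanCLM (𝕜 := ℂ) (outerProd (ψ k)))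
        (exp (((s k : ℝ) : ℂ) • (Matrix.toEuclideanCLM (𝕜 := ℂ) (outerProd (ψ k))
            * Matrix.toEuclideanCLM (𝕜 := ℂ) H
          - Matrix.toEuclideanCLM (𝕜 := ℂ) H
            * Matrix.toEuclideanCLM (𝕜 := ℂ) (outerProd (ψ k)))) (ψ k)) := by
    intro k hk
    rw [hψ k hk, matApp_exp, matApp_exp, _root_.map_smul, _root_.map_smul, map_sub,
      _root_.map_mul, _root_.map_mul]
  have hrect : ∀ k < K, ψt (k + 1)
      = exp ((Complex.I * (θt k : ℂ)) • Matrix.toEuclideanCLM (𝕜 := ℂ) (outerProd (ψt k)))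
        (exp (((st k : ℝ) : ℂ) • (Matrix.toEuclideanCLM (𝕜 := ℂ) (outerProd (ψt k))
            * Matrix.toEuclideanCLM (𝕜 := ℂ) H
          - Matrix.toEuclideanCLM (𝕜 := ℂ) H
            * Matrix.toEuclideanCLM (𝕜 := ℂ) (outerProd (ψt k)))) (ψt k)) := by
    intro k hk
    rw [hψt k hk, matApp_exp, matApp_exp, _root_.map_smul, _root_.map_smul, map_sub,
      _root_.map_mul, _root_.map_mul]
  -- unit norms along both trajectories
  have hn1 : ∀ k, k ≤ K → ‖ψ k‖ = 1 := by
    intro k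
    induction k with
    | zero => exact fun _ => hunit
    | succ k ih =>
      intro hk
      have hk' : k < K := hk
      rw [hrec k hk', exp_skew_apply_norm hn (skewA _ _),
        exp_skew_apply_norm hn (skewB _ _ hHs _)]
      exact ih (le_of_lt hk')
  have hn1t : ∀ k, k ≤ K → ‖ψt k‖ = 1 := by
    intro k
    induction k with
    | zero => intro _; rw [← hinit]; exact hunit
    | succ k ih =>
      intro hk
      have hk' : k < K := hk
      rw [hrect k hk', exp_skew_apply_norm hn (skewA _ _),
        exp_skew_apply_norm hn (skewB _ _ hHs _)]
      exact ih (le_of_lt hk')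
  -- the main induction
  have key : ∀ k, k ≤ K →
      ‖ψ k - ψt k‖ ≤ (δs + δθ) * (((1 + 6 * ζ) ^ k - 1) / (6 * ζ)) := by
    intro k
    induction k with
    | zero =>
      intro _
      rw [hinit, sub_self, norm_zero, pow_zero]
      norm_num
    | succ k ih =>
      intro hk
      have hkK : k < K := hk
      have ihk := ih (le_of_lt hkK)
      rw [hrec k hkK, hrect k hkK]
      have hstep := step hn H hHs hHnorm (ψ k) (ψt k) (hn1 k (le_of_lt hkK))
        (hn1t k (le_of_lt hkK)) (θ k) (θt k) (s k) (st k) ζ (hθζ k hkK) (hsζ k hkK)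
      refine le_trans hstep ?_
      have h1 : |s k - st k| ≤ δs := hδs k hkK
      have h2 : |θ k - θt k| ≤ δθ := hδθ k hkK
      have h3 : (1 + 6 * ζ) * ‖ψ k - ψt k‖
          ≤ (1 + 6 * ζ) * ((δs + δθ) * (((1 + 6 * ζ) ^ k - 1) / (6 * ζ))) :=
        mul_le_mul_of_nonneg_left ihk (by linarith)
      have harith : (1 + 6 * ζ) * ((δs + δθ) * (((1 + 6 * ζ) ^ k - 1) / (6 * ζ))) + δs + δθ
          = (δs + δθ) * (((1 + 6 * ζ) ^ (k + 1) - 1) / (6 * ζ)) := by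
        have hζne : (6 * ζ) ≠ 0 := by positivity
        field_simp
        ring
      linarith
  -- conclusion
  have hfin := key K le_rfl
  have hP1 : (1:ℝ) ≤ (1 + 6 * ζ) ^ K := one_le_pow₀ (by linarith)
  have hm0 : (0:ℝ) ≤ max δs δθ := le_trans hδs0 (le_max_left _ _)
  have hnum : (δs + δθ) ≤ 2 * max δs δθ := by
    have := le_max_left δs δθ
    have := le_max_right δs δθ
    linarith
  have hden : (0:ℝ) ≤ ((1 + 6 * ζ) ^ K - 1) / (6 * ζ) :=
    div_nonneg (by linarith) (by linarith)
  have c1 : (δs + δθ) * (((1 + 6 * ζ) ^ K - 1) / (6 * ζ))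
      ≤ (2 * max δs δθ) * (((1 + 6 * ζ) ^ K - 1) / (6 * ζ)) :=
    mul_le_mul_of_nonneg_right hnum hden
  have c2 : (2 * max δs δθ) * (((1 + 6 * ζ) ^ K - 1) / (6 * ζ))
      ≤ (1 / (3 * ζ)) * (1 + 6 * ζ) ^ K * max δs δθ := by
    have e1 : (2 * max δs δθ) * (((1 + 6 * ζ) ^ K - 1) / (6 * ζ))
        = (2 * max δs δθ * ((1 + 6 * ζ) ^ K - 1)) / (6 * ζ) := by ring
    have e2 : (1 / (3 * ζ)) * (1 + 6 * ζ) ^ K * max δs δθ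
        = (2 * max δs δθ * (1 + 6 * ζ) ^ K) / (6 * ζ) := by
      field_simp
      ring
    rw [e1, e2]
    apply div_le_div_of_nonneg_right ?_ (by linarith)
    · nlinarith [hm0]
  linarith
end
end
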